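/- Let A and σ be n×n real matrices and let 0 < s < t. Then λ(t) ≥ λ₂(t)/t ≥ (λ(t−s)/t) · inf_{‖x‖=1} ∫₀^s ‖e^{−vAᵀ} x‖² dv, where λ(t) := inf_{‖x‖=1} ⟨G_t x, x⟩ and λ₂(t) := inf_{‖x‖=1} ⟨G_{2,t} x, x⟩. -/

import Mathlib

/- Setting: n×n real matrices A, σ; SDE dx = Ax dt + σ dB on ℝⁿ. -/

open MeasureTheory Matrix

noncomputable section

abbrev Vec (n : ℕ) := Fin n → ℝ
abbrev Mat (n : ℕ) := Matrix (Fin n) (Fin n) ℝ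

/-- matrix exponential e^M -/
def mexp {n : ℕ} (M : Mat n) : Mat n := NormedSpace.exp M

/-- The n×n² Kalman block matrix [σ, Aσ, A²σ, …, A^{n-1}σ]. -/
def kalmanMatrix {n : ℕ} (A σ : Mat n) : Matrix (Fin n) (Fin n × Fin n) ℝ :=
  Matrix.of fun i p => (A ^ (p.1 : ℕ) * σ) i p.2

/-- The Kalman rank condition: rank [σ, Aσ, …, A^{n-1}σ] = n. -/
def KalmanRank {n : ℕ} (A σ : Mat n) : Prop := (kalmanMatrix A σ).rank = n

/-- Σ_t = ∫₀ᵗ e^{(t-s)A} σσᵀ e^{(t-s)Aᵀ} ds, the integral taken entrywise. -/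
def SigmaMat {n : ℕ} (A σ : Mat n) (t : ℝ) : Mat n :=
  Matrix.of fun i j =>
    ∫ s in (0:ℝ)..t, (mexp ((t - s) • A) * (σ * σᵀ) * mexp ((t - s) • Aᵀ)) i j

open Classical in
/-- The positive semidefinite square root of a PSD matrix (junk value 0 otherwise). -/
def psdSqrt {n : ℕ} (M : Mat n) : Mat n := if h : M.PosSemidef then
    h.1.eigenvectorUnitary.1 * diagonal ((RCLike.ofReal : ℝ → ℝ) ∘ (√·) ∘ h.1.eigenvalues) *
      (star h.1.eigenvectorUnitary : Mat n) else 0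

/-- standard Gaussian measure on ℝⁿ -/
def stdGaussian (n : ℕ) : Measure (Vec n) :=
  Measure.pi fun _ => ProbabilityTheory.gaussianReal 0 1

/-- The Markov semigroup: P_t f(x) = 𝔼[f(e^{tA}x + Σ_t^{1/2} Z)], Z standard Gaussian. -/
def Pt {n : ℕ} (A σ : Mat n) (t : ℝ) (f : Vec n → ℝ) (x : Vec n) : ℝ :=
  ∫ z, f (mexp (t • A) *ᵥ x + psdSqrt (SigmaMat A σ t) *ᵥ z) ∂(stdGaussian n)

/-- partial derivative ∂_i f(x) -/
def pd {n : ℕ} (i : Fin n) (f : Vec n → ℝ) (x : Vec n) : ℝ := fderiv ℝ f x (Pi.single i 1)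

/-- gradient ∇f(x) -/
def gradV {n : ℕ} (f : Vec n → ℝ) (x : Vec n) : Vec n := fun i => pd i f x

/-- Γ^G(f,g)(x) = ⟨G∇f(x), ∇g(x)⟩ -/
def GammaOp {n : ℕ} (G : Mat n) (f g : Vec n → ℝ) (x : Vec n) : ℝ :=
  (G *ᵥ gradV f x) ⬝ᵥ gradV g x

/-- The generator L f(x) = ⟨Ax, ∇f(x)⟩ + ½ Σᵢⱼ (σσᵀ)ᵢⱼ ∂ᵢ∂ⱼ f(x). -/
def Lop {n : ℕ} (A σ : Mat n) (f : Vec n → ℝ) (x : Vec n) : ℝ :=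
  (A *ᵥ x) ⬝ᵥ gradV f x + (1/2) * ∑ i, ∑ j, (σ * σᵀ) i j * pd i (pd j f) x

/-- Γ₂^G(f) = ½ L Γ^G(f) − Γ^G(f, Lf). -/
def Gamma2Op {n : ℕ} (A σ G : Mat n) (f : Vec n → ℝ) (x : Vec n) : ℝ :=
  (1/2) * Lop A σ (GammaOp G f f) x - GammaOp G f (Lop A σ f) x

/-- G_t = ∫₀ᵗ e^{-vA} σσᵀ e^{-vAᵀ} dv, entrywise. -/
def Gt {n : ℕ} (A σ : Mat n) (t : ℝ) : Mat n :=
  Matrix.of fun i j => ∫ v in (0:ℝ)..t, (mexp ((-v) • A) * (σ * σᵀ) * mexp ((-v) • Aᵀ)) i j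

/-- control distance ρ_t(x,y) = √⟨G_t⁻¹(x−y), x−y⟩ -/
def rhoT {n : ℕ} (A σ : Mat n) (t : ℝ) (x y : Vec n) : ℝ :=
  Real.sqrt (((Gt A σ t)⁻¹ *ᵥ (x - y)) ⬝ᵥ (x - y))

/-- G(s,t) = ∫ₛᵗ e^{(s−v)A} σσᵀ e^{(s−v)Aᵀ} dv, entrywise. -/
def Gst {n : ℕ} (A σ : Mat n) (s t : ℝ) : Mat n :=
  Matrix.of fun i j => ∫ v in s..t, (mexp ((s - v) • A) * (σ * σᵀ) * mexp ((s - v) • Aᵀ)) i j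

/-- The iterate G_{2,t} = ∫₀ᵗ e^{−vA} G(v,t) e^{−vAᵀ} dv, entrywise. -/
def G2t {n : ℕ} (A σ : Mat n) (t : ℝ) : Mat n :=
  Matrix.of fun i j => ∫ v in (0:ℝ)..t, (mexp ((-v) • A) * Gst A σ v t * mexp ((-v) • Aᵀ)) i j

/-- λ(t) = inf_{‖x‖=1} ⟨G_t x, x⟩. -/
def lamT {n : ℕ} (A σ : Mat n) (t : ℝ) : ℝ :=
  sInf { r : ℝ | ∃ x : Vec n, x ⬝ᵥ x = 1 ∧ r = (Gt A σ t *ᵥ x) ⬝ᵥ x }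

/-- λ₂(t) = inf_{‖x‖=1} ⟨G_{2,t} x, x⟩. -/
def lam2T {n : ℕ} (A σ : Mat n) (t : ℝ) : ℝ :=
  sInf { r : ℝ | ∃ x : Vec n, x ⬝ᵥ x = 1 ∧ r = (G2t A σ t *ᵥ x) ⬝ᵥ x }

/-! ### Auxiliary lemmas for `stmt_11` -/

section AuxStmt11

attribute [local instance] Matrix.linftyOpNormedRing Matrix.linftyOpNormedAlgebra in
lemma aux_cont_mexp {n : ℕ} (B : Mat n) : Continuous fun v : ℝ => mexp (v • B) :=
  NormedSpace.exp_continuous.comp (continuous_id.smul continuous_const)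

lemma aux_cont_mexp_neg {n : ℕ} (B : Mat n) : Continuous fun v : ℝ => mexp ((-v) • B) :=
  (aux_cont_mexp B).comp continuous_neg

lemma mexp_add_mulVec {n : ℕ} (B : Mat n) (a b : ℝ) (x : Vec n) :
    mexp (a • B) *ᵥ (mexp (b • B) *ᵥ x) = mexp ((a + b) • B) *ᵥ x := by
  unfold mexp
  rw [Matrix.mulVec_mulVec, add_smul, Matrix.exp_add_of_commute]
  exact (Commute.refl B).smul_left a |>.smul_right b

lemma mexp_neg_transpose {n : ℕ} (B : Mat n) (a : ℝ) :
    mexp (a • Bᵀ) = (mexp (a • B))ᵀ := by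
  unfold mexp
  rw [← Matrix.transpose_smul, Matrix.exp_transpose]

lemma quad_PMPt {n : ℕ} (P M : Mat n) (x : Vec n) :
    ((P * M * Pᵀ) *ᵥ x) ⬝ᵥ x = (M *ᵥ (Pᵀ *ᵥ x)) ⬝ᵥ (Pᵀ *ᵥ x) := by
  rw [← Matrix.mulVec_mulVec, ← Matrix.mulVec_mulVec, dotProduct_comm,
    Matrix.dotProduct_mulVec, ← Matrix.mulVec_transpose, dotProduct_comm]

lemma quad_sq {n : ℕ} (σ : Mat n) (w : Vec n) :
    ((σ * σᵀ) *ᵥ w) ⬝ᵥ w = (σᵀ *ᵥ w) ⬝ᵥ (σᵀ *ᵥ w) := by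
  rw [← Matrix.mulVec_mulVec, dotProduct_comm, Matrix.dotProduct_mulVec,
    ← Matrix.mulVec_transpose, dotProduct_comm]

lemma dot_self_nonneg {n : ℕ} (w : Vec n) : 0 ≤ w ⬝ᵥ w :=
  Finset.sum_nonneg fun _ _ => mul_self_nonneg _

lemma integral_quad {n : ℕ} (F : ℝ → Mat n) (hF : Continuous F) (a b : ℝ) (x : Vec n) :
    ((Matrix.of fun i j => ∫ v in a..b, F v i j) *ᵥ x) ⬝ᵥ x
      = ∫ v in a..b, (F v *ᵥ x) ⬝ᵥ x := by
  have hc : ∀ i j : Fin n, Continuous (fun v => F v i j * x j * x i) := fun i j =>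
    ((hF.matrix_elem i j).mul continuous_const).mul continuous_const
  have hs : ∀ i : Fin n, Continuous (fun v => ∑ j : Fin n, F v i j * x j * x i) :=
    fun i => continuous_finset_sum _ (fun j _ => hc i j)
  simp only [Matrix.mulVec, dotProduct, Matrix.of_apply, Finset.sum_mul]
  have h1 : (∫ v in a..b, ∑ i : Fin n, ∑ j : Fin n, F v i j * x j * x i)
      = ∑ i : Fin n, ∫ v in a..b, ∑ j : Fin n, F v i j * x j * x i :=
    intervalIntegral.integral_finset_sum (fun i _ => (hs i).intervalIntegrable a b)
  have h2 : ∀ i : Fin n, (∫ v in a..b, ∑ j : Fin n, F v i j * x j * x i)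
      = ∑ j : Fin n, ∫ v in a..b, F v i j * x j * x i := fun i =>
    intervalIntegral.integral_finset_sum (fun j _ => (hc i j).intervalIntegrable a b)
  rw [h1]
  refine Finset.sum_congr rfl fun i _ => ?_
  rw [h2 i]
  refine Finset.sum_congr rfl fun j _ => ?_
  rw [intervalIntegral.integral_mul_const, intervalIntegral.integral_mul_const]

/-- the scalar integrand `⟨σσᵀ e^{-uAᵀ}x, e^{-uAᵀ}x⟩`. -/
def qf {n : ℕ} (A σ : Mat n) (x : Vec n) (u : ℝ) : ℝ :=
  ((σ * σᵀ) *ᵥ (mexp ((-u) • Aᵀ) *ᵥ x)) ⬝ᵥ (mexp ((-u) • Aᵀ) *ᵥ x)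

lemma qf_nonneg {n : ℕ} (A σ : Mat n) (x : Vec n) (u : ℝ) : 0 ≤ qf A σ x u := by
  rw [qf, quad_sq]; exact dot_self_nonneg _

lemma qf_cont {n : ℕ} (A σ : Mat n) (x : Vec n) : Continuous (qf A σ x) := by
  unfold qf
  have h : Continuous fun u : ℝ => mexp ((-u) • Aᵀ) *ᵥ x :=
    (aux_cont_mexp_neg Aᵀ).matrix_mulVec continuous_const
  exact (continuous_const.matrix_mulVec h).dotProduct h

lemma qf_shift {n : ℕ} (A σ : Mat n) (x : Vec n) (v w : ℝ) :
    qf A σ x (w + v) = qf A σ (mexp ((-v) • Aᵀ) *ᵥ x) w := by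
  unfold qf
  rw [mexp_add_mulVec, show -w + -v = -(w + v) by ring]

lemma quad_integrand {n : ℕ} (A σ : Mat n) (c : ℝ) (y : Vec n) :
    ((mexp (c • A) * (σ * σᵀ) * mexp (c • Aᵀ)) *ᵥ y) ⬝ᵥ y
      = ((σ * σᵀ) *ᵥ (mexp (c • Aᵀ) *ᵥ y)) ⬝ᵥ (mexp (c • Aᵀ) *ᵥ y) := by
  rw [mexp_neg_transpose, quad_PMPt]

lemma Gt_integrand_cont {n : ℕ} (A σ : Mat n) :
    Continuous fun v : ℝ => mexp ((-v) • A) * (σ * σᵀ) * mexp ((-v) • Aᵀ) :=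
  ((aux_cont_mexp_neg A).matrix_mul continuous_const).matrix_mul (aux_cont_mexp_neg Aᵀ)

lemma QGt {n : ℕ} (A σ : Mat n) (r : ℝ) (x : Vec n) :
    (Gt A σ r *ᵥ x) ⬝ᵥ x = ∫ u in (0:ℝ)..r, qf A σ x u := by
  unfold Gt
  rw [integral_quad (fun v => mexp ((-v) • A) * (σ * σᵀ) * mexp ((-v) • Aᵀ))
    (Gt_integrand_cont A σ) 0 r x]
  exact intervalIntegral.integral_congr fun u _ => quad_integrand A σ (-u) x

lemma Gst_eq {n : ℕ} (A σ : Mat n) (v t : ℝ) : Gst A σ v t = Gt A σ (t - v) := by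
  ext i j
  show (∫ u in v..t, (mexp ((v - u) • A) * (σ * σᵀ) * mexp ((v - u) • Aᵀ)) i j)
    = ∫ w in (0:ℝ)..(t - v), (mexp ((-w) • A) * (σ * σᵀ) * mexp ((-w) • Aᵀ)) i j
  have h := intervalIntegral.integral_comp_add_right (a := (0:ℝ)) (b := t - v)
    (fun u => (mexp ((v - u) • A) * (σ * σᵀ) * mexp ((v - u) • Aᵀ)) i j) v
  rw [zero_add, show t - v + v = t by ring] at h
  rw [← h]
  refine intervalIntegral.integral_congr fun w _ => ?_
  rw [show v - (w + v) = -w by ring]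

lemma Gt_cont {n : ℕ} (A σ : Mat n) : Continuous fun r : ℝ => Gt A σ r := by
  apply continuous_matrix
  intro i j
  exact intervalIntegral.continuous_primitive
    (fun a b => ((Gt_integrand_cont A σ).matrix_elem i j).intervalIntegrable a b) 0

lemma QGt_shift {n : ℕ} (A σ : Mat n) (r v : ℝ) (x : Vec n) :
    (Gt A σ r *ᵥ (mexp ((-v) • Aᵀ) *ᵥ x)) ⬝ᵥ (mexp ((-v) • Aᵀ) *ᵥ x)
      = ∫ u in v..(r + v), qf A σ x u := by
  rw [QGt]
  have h1 : ∀ w : ℝ, qf A σ (mexp ((-v) • Aᵀ) *ᵥ x) w = qf A σ x (w + v) :=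
    fun w => (qf_shift A σ x v w).symm
  rw [intervalIntegral.integral_congr (g := fun w => qf A σ x (w + v)) (fun w _ => h1 w)]
  have h := intervalIntegral.integral_comp_add_right (a := (0:ℝ)) (b := r) (qf A σ x) v
  rw [zero_add] at h
  exact h

lemma QG2t_inner {n : ℕ} (A σ : Mat n) (t v : ℝ) (x : Vec n) :
    ((mexp ((-v) • A) * Gst A σ v t * mexp ((-v) • Aᵀ)) *ᵥ x) ⬝ᵥ x
      = ∫ u in v..t, qf A σ x u := by
  rw [mexp_neg_transpose, quad_PMPt, ← mexp_neg_transpose, Gst_eq,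
    QGt_shift A σ (t - v) v x, show t - v + v = t by ring]

lemma QG2t {n : ℕ} (A σ : Mat n) (t : ℝ) (x : Vec n) :
    (G2t A σ t *ᵥ x) ⬝ᵥ x = ∫ v in (0:ℝ)..t, ∫ u in v..t, qf A σ x u := by
  unfold G2t
  have hGst : Continuous fun v : ℝ => Gst A σ v t := by
    simp only [Gst_eq]
    exact (Gt_cont A σ).comp (continuous_const.sub continuous_id)
  have hFc2 : Continuous fun v : ℝ => mexp ((-v) • A) * Gst A σ v t * mexp ((-v) • Aᵀ) :=
    ((aux_cont_mexp_neg A).matrix_mul hGst).matrix_mul (aux_cont_mexp_neg Aᵀ)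
  rw [integral_quad (fun v => mexp ((-v) • A) * Gst A σ v t * mexp ((-v) • Aᵀ)) hFc2 0 t x]
  exact intervalIntegral.integral_congr fun v _ => QG2t_inner A σ t v x

lemma Q_Gt_nonneg {n : ℕ} (A σ : Mat n) {r : ℝ} (hr : 0 ≤ r) (x : Vec n) :
    0 ≤ (Gt A σ r *ᵥ x) ⬝ᵥ x := by
  rw [QGt]
  exact intervalIntegral.integral_nonneg hr fun u _ => qf_nonneg A σ x u

lemma lamT_nonneg {n : ℕ} (A σ : Mat n) {r : ℝ} (hr : 0 ≤ r) : 0 ≤ lamT A σ r := by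
  apply Real.sInf_nonneg
  rintro z ⟨x, -, rfl⟩
  exact Q_Gt_nonneg A σ hr x

lemma lamT_mul_le {n : ℕ} (A σ : Mat n) {r : ℝ} (hr : 0 ≤ r) (y : Vec n) :
    lamT A σ r * (y ⬝ᵥ y) ≤ (Gt A σ r *ᵥ y) ⬝ᵥ y := by
  rcases eq_or_lt_of_le (dot_self_nonneg y) with h0 | hc
  · rw [← h0, mul_zero]
    exact Q_Gt_nonneg A σ hr y
  · set c : ℝ := y ⬝ᵥ y with hcdef
    set a : ℝ := (Real.sqrt c)⁻¹ with hadef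
    have ha : a * a * c = 1 := by
      rw [hadef, ← mul_inv, Real.mul_self_sqrt hc.le, inv_mul_cancel₀ hc.ne']
    have hu : (a • y) ⬝ᵥ (a • y) = 1 := by
      rw [smul_dotProduct, dotProduct_smul, smul_eq_mul, smul_eq_mul,
        ← mul_assoc, ← hcdef, ha]
    have hQ : (Gt A σ r *ᵥ (a • y)) ⬝ᵥ (a • y) = (a * a) * ((Gt A σ r *ᵥ y) ⬝ᵥ y) := by
      rw [Matrix.mulVec_smul, smul_dotProduct, dotProduct_smul,
        smul_eq_mul, smul_eq_mul, ← mul_assoc]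
    have hlow : lamT A σ r ≤ (a * a) * ((Gt A σ r *ᵥ y) ⬝ᵥ y) := by
      rw [← hQ]
      refine csInf_le ⟨0, ?_⟩ ⟨a • y, hu, rfl⟩
      rintro z ⟨x, -, rfl⟩
      exact Q_Gt_nonneg A σ hr x
    calc lamT A σ r * c ≤ ((a * a) * ((Gt A σ r *ᵥ y) ⬝ᵥ y)) * c :=
          mul_le_mul_of_nonneg_right hlow hc.le
      _ = (Gt A σ r *ᵥ y) ⬝ᵥ y := by
          linear_combination ((Gt A σ r *ᵥ y) ⬝ᵥ y) * ha

end AuxStmt11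

/-- for 0 < s < t,
λ(t) ≥ λ₂(t)/t ≥ (λ(t−s)/t) · inf_{‖x‖=1} ∫₀ˢ ‖e^{−vAᵀ}x‖² dv. -/
theorem stmt_11 {n : ℕ} (A σ : Mat n) (s t : ℝ) (hs : 0 < s) (hst : s < t) :
    lamT A σ t ≥ lam2T A σ t / t ∧
    lam2T A σ t / t ≥ lamT A σ (t - s) / t *
      sInf { r : ℝ | ∃ x : Vec n, x ⬝ᵥ x = 1 ∧
        r = ∫ v in (0:ℝ)..s, (mexp ((-v) • Aᵀ) *ᵥ x) ⬝ᵥ (mexp ((-v) • Aᵀ) *ᵥ x) } := by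
  have ht : 0 < t := hs.trans hst
  have hts : (0:ℝ) ≤ t - s := by linarith
  rcases Nat.eq_zero_or_pos n with hn | hn
  · subst hn
    have hempty : ∀ (g : Vec 0 → ℝ),
        {r : ℝ | ∃ x : Vec 0, x ⬝ᵥ x = 1 ∧ r = g x} = ∅ := by
      intro g
      ext r
      simp only [Set.mem_setOf_eq, Set.mem_empty_iff_false, iff_false, not_exists]
      rintro x ⟨hx, -⟩
      simp [dotProduct] at hx
    unfold lamT lam2T
    rw [hempty, hempty, hempty, hempty]
    simp only [Real.sInf_empty]
    norm_num
  · set e : Vec n := Pi.single (⟨0, hn⟩ : Fin n) (1:ℝ) with hedef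
    have he : e ⬝ᵥ e = 1 := by
      simp [hedef, dotProduct_single]
    have hqi : ∀ (x : Vec n) (a b : ℝ), IntervalIntegrable (qf A σ x) volume a b :=
      fun x a b => (qf_cont A σ x).intervalIntegrable a b
    have hIc : ∀ x : Vec n, Continuous fun v => ∫ u in v..t, qf A σ x u := by
      intro x
      have hp := intervalIntegral.continuous_primitive (fun a b => hqi x a b) t
      have heq : (fun v => ∫ u in v..t, qf A σ x u)
          = fun v => -∫ u in t..v, qf A σ x u :=
        funext fun v => intervalIntegral.integral_symm t v
      rw [heq]; exact hp.neg
    have hInonneg : ∀ (x : Vec n) (v : ℝ), v ≤ t → 0 ≤ ∫ u in v..t, qf A σ x u :=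
      fun x v hv => intervalIntegral.integral_nonneg hv fun u _ => qf_nonneg A σ x u
    have hQG2nonneg : ∀ x : Vec n, 0 ≤ (G2t A σ t *ᵥ x) ⬝ᵥ x := by
      intro x; rw [QG2t]
      exact intervalIntegral.integral_nonneg ht.le fun v hv => hInonneg x v hv.2
    have hbb2 : BddBelow {r : ℝ | ∃ x : Vec n, x ⬝ᵥ x = 1 ∧ r = (G2t A σ t *ᵥ x) ⬝ᵥ x} :=
      ⟨0, by rintro z ⟨x, -, rfl⟩; exact hQG2nonneg x⟩
    constructor
    · rw [ge_iff_le]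
      refine le_csInf ⟨(Gt A σ t *ᵥ e) ⬝ᵥ e, e, he, rfl⟩ ?_
      rintro b ⟨x, hx, rfl⟩
      rw [div_le_iff₀ ht]
      have h1 : lam2T A σ t ≤ (G2t A σ t *ᵥ x) ⬝ᵥ x := csInf_le hbb2 ⟨x, hx, rfl⟩
      have h2 : (G2t A σ t *ᵥ x) ⬝ᵥ x ≤ ((Gt A σ t *ᵥ x) ⬝ᵥ x) * t := by
        rw [QG2t]
        have hIle : ∀ v ∈ Set.Icc (0:ℝ) t,
            (∫ u in v..t, qf A σ x u) ≤ (Gt A σ t *ᵥ x) ⬝ᵥ x := by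
          intro v hv
          rw [QGt]
          have hadd := intervalIntegral.integral_add_adjacent_intervals
            (hqi x 0 v) (hqi x v t)
          have h0v : 0 ≤ ∫ u in (0:ℝ)..v, qf A σ x u :=
            intervalIntegral.integral_nonneg hv.1 fun u _ => qf_nonneg A σ x u
          linarith
        have hmono := intervalIntegral.integral_mono_on ht.le
          ((hIc x).intervalIntegrable (μ := volume) 0 t) (continuous_const.intervalIntegrable (μ := volume) 0 t) hIle
        rw [intervalIntegral.integral_const, sub_zero, smul_eq_mul, mul_comm] at hmono
        exact hmono
      linarith
    · rw [ge_iff_le, div_mul_eq_mul_div, div_le_div_iff_of_pos_right ht]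
      set L : ℝ := lamT A σ (t - s) with hLdef
      have hL0 : 0 ≤ L := lamT_nonneg A σ hts
      have key : ∀ x : Vec n, L * (∫ v in (0:ℝ)..s,
          (mexp ((-v) • Aᵀ) *ᵥ x) ⬝ᵥ (mexp ((-v) • Aᵀ) *ᵥ x))
          ≤ (G2t A σ t *ᵥ x) ⬝ᵥ x := by
        intro x
        rw [QG2t]
        have hmv : Continuous fun v : ℝ => mexp ((-v) • Aᵀ) *ᵥ x :=
          (aux_cont_mexp_neg Aᵀ).matrix_mulVec continuous_const
        have hdc : Continuous fun v : ℝ =>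
            (mexp ((-v) • Aᵀ) *ᵥ x) ⬝ᵥ (mexp ((-v) • Aᵀ) *ᵥ x) :=
          hmv.dotProduct hmv
        have hLd : Continuous fun v : ℝ =>
            L * ((mexp ((-v) • Aᵀ) *ᵥ x) ⬝ᵥ (mexp ((-v) • Aᵀ) *ᵥ x)) :=
          continuous_const.mul hdc
        have hstep : ∀ v ∈ Set.Icc (0:ℝ) s,
            L * ((mexp ((-v) • Aᵀ) *ᵥ x) ⬝ᵥ (mexp ((-v) • Aᵀ) *ᵥ x))
              ≤ ∫ u in v..t, qf A σ x u := by
          intro v hv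
          have h1 := lamT_mul_le A σ hts (mexp ((-v) • Aᵀ) *ᵥ x)
          rw [QGt_shift A σ (t - s) v x] at h1
          have hadd := intervalIntegral.integral_add_adjacent_intervals
            (hqi x v (t - s + v)) (hqi x (t - s + v) t)
          have hpos : 0 ≤ ∫ u in (t - s + v)..t, qf A σ x u :=
            intervalIntegral.integral_nonneg (by linarith [hv.2])
              fun u _ => qf_nonneg A σ x u
          rw [mul_comm] at h1
          linarith
        have hmono := intervalIntegral.integral_mono_on hs.le
          (hLd.intervalIntegrable (μ := volume) 0 s) ((hIc x).intervalIntegrable (μ := volume) 0 s) hstep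
        rw [intervalIntegral.integral_const_mul] at hmono
        have hsplit := intervalIntegral.integral_add_adjacent_intervals
          ((hIc x).intervalIntegrable (μ := volume) 0 s) ((hIc x).intervalIntegrable (μ := volume) s t)
        have hpos2 : 0 ≤ ∫ v in s..t, ∫ u in v..t, qf A σ x u :=
          intervalIntegral.integral_nonneg hst.le fun v hv => hInonneg x v hv.2
        linarith
      refine le_csInf ⟨(G2t A σ t *ᵥ e) ⬝ᵥ e, e, he, rfl⟩ ?_
      rintro b ⟨x, hx, rfl⟩
      have hS3 : sInf { r : ℝ | ∃ x : Vec n, x ⬝ᵥ x = 1 ∧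
          r = ∫ v in (0:ℝ)..s, (mexp ((-v) • Aᵀ) *ᵥ x) ⬝ᵥ (mexp ((-v) • Aᵀ) *ᵥ x) }
          ≤ ∫ v in (0:ℝ)..s, (mexp ((-v) • Aᵀ) *ᵥ x) ⬝ᵥ (mexp ((-v) • Aᵀ) *ᵥ x) := by
        refine csInf_le ⟨0, ?_⟩ ⟨x, hx, rfl⟩
        rintro z ⟨x', -, rfl⟩
        exact intervalIntegral.integral_nonneg hs.le fun v _ => dot_self_nonneg _
      calc L * sInf _ ≤ L * ∫ v in (0:ℝ)..s,
            (mexp ((-v) • Aᵀ) *ᵥ x) ⬝ᵥ (mexp ((-v) • Aᵀ) *ᵥ x) :=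
            mul_le_mul_of_nonneg_left hS3 hL0
        _ ≤ (G2t A σ t *ᵥ x) ⬝ᵥ x := key x
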